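/- Let A ∈ T^{n×n} with ρ(A) = 0 be such that its critical graph G_c(A) is the disjoint union of simple circuits covering all nodes {1,…,n}. Then per(A) = 0, A has a unique maximizing permutation τ_A, and the graph of τ_A (arcs (i, τ_A(i))) coincides with G_c(A). -/

import Mathlib

/-- The max-plus (tropical) semiring `T = ℝ ∪ {-∞}`. -/
abbrev T : Type := WithBot ℝ

/-- Tropical matrix product. -/
noncomputable def tmul {n m k : ℕ} (A : Fin n → Fin m → T) (B : Fin m → Fin k → T) :
    Fin n → Fin k → T :=
  fun i j => Finset.univ.sup fun l => A i l + B l j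

/-- Tropical matrix-vector product. -/
noncomputable def tmulVec {n m : ℕ} (A : Fin n → Fin m → T) (u : Fin m → T) : Fin n → T :=
  fun i => Finset.univ.sup fun j => A i j + u j

/-- Tropical identity matrix. -/
noncomputable def tId (n : ℕ) : Fin n → Fin n → T :=
  fun i j => if i = j then (0 : T) else ⊥

/-- Tropical matrix powers. -/
noncomputable def tpow {n : ℕ} (A : Fin n → Fin n → T) : ℕ → (Fin n → Fin n → T)
  | 0 => tId n
  | (m + 1) => tmul (tpow A m) A

/-- Tropical product of a list of matrices (empty product = identity). -/
noncomputable def tProd {n : ℕ} : List (Fin n → Fin n → T) → (Fin n → Fin n → T)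
  | [] => tId n
  | (M :: L) => tmul M (tProd L)

/-- Weight of a permutation. -/
noncomputable def wt {n : ℕ} (A : Fin n → Fin n → T) (σ : Equiv.Perm (Fin n)) : T :=
  ∑ i, A i (σ i)

/-- Tropical permanent. -/
noncomputable def per {n : ℕ} (A : Fin n → Fin n → T) : T :=
  Finset.univ.sup fun σ : Equiv.Perm (Fin n) => wt A σ

/-- Tropical non-singularity: finite permanent attained by a unique permutation. -/
def NonSingular {n : ℕ} (A : Fin n → Fin n → T) : Prop :=
  per A ≠ ⊥ ∧ ∃! σ : Equiv.Perm (Fin n), wt A σ = per A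

/-- Weight of the circuit `c 0 → c 1 → ⋯ → c ℓ → c 0` (length `ℓ+1`). -/
noncomputable def cwt {n ℓ : ℕ} (A : Fin n → Fin n → T) (c : Fin (ℓ + 1) → Fin n) : T :=
  ∑ k : Fin (ℓ + 1), A (c k) (c (k + 1))

/-- `ρ(A) = r`: some circuit has mean weight `r`, and every circuit has mean weight `≤ r`. -/
def RhoEq {n : ℕ} (A : Fin n → Fin n → T) (r : ℝ) : Prop :=
  (∃ ℓ, ∃ c : Fin (ℓ + 1) → Fin n, cwt A c = ((((ℓ : ℝ) + 1) * r : ℝ) : T)) ∧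
  ∀ ℓ, ∀ c : Fin (ℓ + 1) → Fin n, cwt A c ≤ ((((ℓ : ℝ) + 1) * r : ℝ) : T)

/-- `(i,j)` is an arc of the critical graph (lies on a circuit of mean weight `r = ρ(A)`). -/
def CritArc {n : ℕ} (A : Fin n → Fin n → T) (r : ℝ) (i j : Fin n) : Prop :=
  ∃ ℓ, ∃ c : Fin (ℓ + 1) → Fin n, cwt A c = ((((ℓ : ℝ) + 1) * r : ℝ) : T) ∧
    ∃ k : Fin (ℓ + 1), c k = i ∧ c (k + 1) = j

/-- `i` is a node of the critical graph. -/
def CritNode {n : ℕ} (A : Fin n → Fin n → T) (r : ℝ) (i : Fin n) : Prop :=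
  ∃ ℓ, ∃ c : Fin (ℓ + 1) → Fin n, cwt A c = ((((ℓ : ℝ) + 1) * r : ℝ) : T) ∧
    ∃ k : Fin (ℓ + 1), c k = i

/-- Reachability in the critical graph. -/
def CritReach {n : ℕ} (A : Fin n → Fin n → T) (r : ℝ) : Fin n → Fin n → Prop :=
  Relation.ReflTransGen (fun i j => CritArc A r i j)

/-- Same strongly connected component of the critical graph. -/
def SameScc {n : ℕ} (A : Fin n → Fin n → T) (r : ℝ) (i j : Fin n) : Prop :=
  CritReach A r i j ∧ CritReach A r j i

/-- `R` is a set of representatives, one per scc of the critical graph. -/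
def SccReps {n : ℕ} (A : Fin n → Fin n → T) (r : ℝ) (R : Finset (Fin n)) : Prop :=
  (∀ i ∈ R, CritNode A r i) ∧
  (∀ i ∈ R, ∀ j ∈ R, i ≠ j → ¬ SameScc A r i j) ∧
  (∀ j, CritNode A r j → ∃ i ∈ R, SameScc A r i j)

/-- Cyclicity of the scc of the critical graph containing `i`:
the gcd (greatest common divisor) of the lengths of the critical circuits through `i`. -/
noncomputable def cycAt {n : ℕ} (A : Fin n → Fin n → T) (r : ℝ) (i : Fin n) : ℕ :=
  sSup {d : ℕ | ∀ ℓ : ℕ,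
    (∃ c : Fin (ℓ + 1) → Fin n, cwt A c = ((((ℓ : ℝ) + 1) * r : ℝ) : T) ∧ c 0 = i) →
    d ∣ (ℓ + 1)}

/-- `A` has an `r × r` tropically non-singular submatrix. -/
def HasNSsub {n m : ℕ} (A : Fin n → Fin m → T) (r : ℕ) : Prop :=
  ∃ f : Fin r → Fin n, ∃ g : Fin r → Fin m,
    Function.Injective f ∧ Function.Injective g ∧
    NonSingular (fun i j => A (f i) (g j))

/-- Tropical rank: maximal size of a tropically non-singular square submatrix. -/
noncomputable def trrk {n m : ℕ} (A : Fin n → Fin m → T) : ℕ :=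
  sSup {r : ℕ | HasNSsub A r}

/-- Tropical convex hull (span) of a finite family of vectors of `T^n`. -/
def tSpan {n m : ℕ} (v : Fin m → (Fin n → T)) : Set (Fin n → T) :=
  { w | ∃ α : Fin m → T, w = fun i => Finset.univ.sup fun j => α j + v j i }

/-- Weak dimension of a tropically convex set: minimal size of a generating family. -/
noncomputable def weakDim {n : ℕ} (X : Set (Fin n → T)) : ℕ :=
  sInf {k : ℕ | ∃ v : Fin k → (Fin n → T), tSpan v = X}

/-- Column rank: weak dimension of the tropical convex hull of the columns. -/
noncomputable def colrk {n m : ℕ} (A : Fin n → Fin m → T) : ℕ :=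
  weakDim (tSpan fun j => fun i => A i j)

/-- Row rank: weak dimension of the tropical convex hull of the rows. -/
noncomputable def rowrk {n m : ℕ} (A : Fin n → Fin m → T) : ℕ :=
  weakDim (tSpan fun i => fun j => A i j)


section StmtFourAux

lemma my_pow_apply_mul {n : ℕ} (σ : Equiv.Perm (Fin n)) (i : Fin n) (d : ℕ)
    (hfix : (σ ^ d) i = i) : ∀ q, (σ ^ (d * q)) i = i := by
  intro q
  induction q with
  | zero => simp
  | succ q ih => rw [Nat.mul_succ, pow_add, Equiv.Perm.mul_apply, hfix, ih]

lemma my_pow_mod_apply {n : ℕ} (σ : Equiv.Perm (Fin n)) (i : Fin n) (d : ℕ)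
    (hfix : (σ ^ d) i = i) (k : ℕ) : (σ ^ (k % d)) i = (σ ^ k) i := by
  conv_rhs => rw [← Nat.mod_add_div k d]
  rw [pow_add, Equiv.Perm.mul_apply, my_pow_apply_mul σ i d hfix]

lemma my_cwt_pow {n ℓ : ℕ} (A : Fin n → Fin n → T) (σ : Equiv.Perm (Fin n)) (i : Fin n)
    (hfix : (σ ^ (ℓ + 1)) i = i) :
    cwt A (fun k : Fin (ℓ + 1) => (σ ^ (k : ℕ)) i)
      = ∑ k ∈ Finset.range (ℓ + 1), A ((σ ^ k) i) ((σ ^ (k + 1)) i) := by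
  rw [← Fin.sum_univ_eq_sum_range (fun k => A ((σ ^ k) i) ((σ ^ (k + 1)) i)) (ℓ + 1)]
  refine Finset.sum_congr rfl fun k _ => ?_
  show A ((σ ^ (k : ℕ)) i) ((σ ^ ((k + 1 : Fin (ℓ + 1)) : ℕ)) i)
      = A ((σ ^ (k : ℕ)) i) ((σ ^ ((k : ℕ) + 1)) i)
  have hv : ((k + 1 : Fin (ℓ + 1)) : ℕ) = ((k : ℕ) + 1) % (ℓ + 1) := by
    rw [Fin.add_def]
    simp [Fin.val_one', Nat.add_mod_mod]
  rw [hv, my_pow_mod_apply σ i (ℓ + 1) hfix]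

lemma my_sum_block {M : Type*} [AddCommMonoid M] (g : ℕ → M) (d : ℕ)
    (hper : ∀ k, g (k + d) = g k) (t : ℕ) :
    ∑ k ∈ Finset.range (t * d), g k = t • ∑ k ∈ Finset.range d, g k := by
  have hrep : ∀ j k, g (j * d + k) = g k := by
    intro j
    induction j with
    | zero => intro k; simp
    | succ j ih =>
      intro k
      have h : (j + 1) * d + k = (j * d + k) + d := by ring
      rw [h, hper, ih]
  induction t with
  | zero => simp
  | succ t ih =>
    have h : (t + 1) * d = t * d + d := by ring
    rw [h, Finset.sum_range_add, ih, succ_nsmul]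
    congr 1
    exact Finset.sum_congr rfl fun k _ => hrep t k

lemma my_nsmul_coe (d : ℕ) (w : ℝ) : d • ((w : T)) = (((d : ℝ) * w : ℝ) : T) := by
  induction d with
  | zero => simp
  | succ d ih =>
    rw [succ_nsmul, ih, ← WithBot.coe_add, WithBot.coe_eq_coe]
    push_cast
    ring

lemma my_nsmul_bot (d : ℕ) (hd : 0 < d) : d • (⊥ : T) = ⊥ := by
  cases d with
  | zero => omega
  | succ d => rw [succ_nsmul]; simp

lemma my_nsmul_eq_zero {d : ℕ} (hd : 0 < d) {x : T} (h : d • x = 0) : x = 0 := by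
  induction x using WithBot.recBotCoe with
  | bot => rw [my_nsmul_bot d hd] at h; simp at h
  | coe w =>
    rw [my_nsmul_coe] at h
    have hw : (d : ℝ) * w = 0 := by exact_mod_cast h
    have hw0 : w = 0 := by
      rcases mul_eq_zero.mp hw with h' | h'
      · exact absurd h' (by positivity)
      · exact h'
    simp [hw0]

lemma my_nsmul_nonpos {d : ℕ} (hd : 0 < d) {x : T} (h : d • x ≤ 0) : x ≤ 0 := by
  induction x using WithBot.recBotCoe with
  | bot => exact bot_le
  | coe w =>
    rw [my_nsmul_coe] at h
    have h0 : ((0 : ℝ) : T) = 0 := by simp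
    rw [← h0, WithBot.coe_le_coe] at h ⊢
    have hd' : (0 : ℝ) < (d : ℝ) := by exact_mod_cast hd
    nlinarith

lemma my_S_le {n : ℕ} (A : Fin n → Fin n → T) (h0 : RhoEq A 0) (σ : Equiv.Perm (Fin n))
    (i : Fin n) {d : ℕ} (hd : 0 < d) (hfix : (σ ^ d) i = i) :
    ∑ k ∈ Finset.range d, A ((σ ^ k) i) ((σ ^ (k + 1)) i) ≤ 0 := by
  obtain ⟨ℓ, rfl⟩ : ∃ ℓ, d = ℓ + 1 := ⟨d - 1, by omega⟩
  have h := h0.2 ℓ (fun k : Fin (ℓ + 1) => (σ ^ (k : ℕ)) i)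
  rw [my_cwt_pow A σ i hfix] at h
  simpa using h

lemma my_sum_S {n : ℕ} (A : Fin n → Fin n → T) (σ : Equiv.Perm (Fin n)) (m : ℕ) :
    ∑ i : Fin n, ∑ k ∈ Finset.range m, A ((σ ^ k) i) ((σ ^ (k + 1)) i) = m • wt A σ := by
  rw [Finset.sum_comm]
  have hinner : ∀ k : ℕ, ∑ i : Fin n, A ((σ ^ k) i) ((σ ^ (k + 1)) i) = wt A σ := by
    intro k
    have h1 : ∀ i, (σ ^ (k + 1)) i = σ ((σ ^ k) i) := by
      intro i; rw [pow_succ', Equiv.Perm.mul_apply]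
    calc ∑ i : Fin n, A ((σ ^ k) i) ((σ ^ (k + 1)) i)
        = ∑ i : Fin n, A ((σ ^ k) i) (σ ((σ ^ k) i)) :=
          Finset.sum_congr rfl fun i _ => by rw [h1]
      _ = ∑ i : Fin n, A i (σ i) :=
          Equiv.sum_comp (σ ^ k : Equiv.Perm (Fin n)) (fun j => A j (σ j))
      _ = wt A σ := rfl
  simp [hinner]

lemma my_critC {n : ℕ} (A : Fin n → Fin n → T) (τ : Equiv.Perm (Fin n))
    (hτ : ∀ i j, CritArc A 0 i j ↔ j = τ i) (i : Fin n) :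
    ∃ d, 0 < d ∧ (τ ^ d) i = i ∧
      ∑ k ∈ Finset.range d, A ((τ ^ k) i) ((τ ^ (k + 1)) i) = 0 := by
  obtain ⟨ℓ, c, hc, k0, hk0, -⟩ := (hτ i (τ i)).2 rfl
  have hstep : ∀ k : Fin (ℓ + 1), c (k + 1) = τ (c k) := fun k =>
    (hτ (c k) (c (k + 1))).1 ⟨ℓ, c, hc, k, rfl, rfl⟩
  have hck : ∀ k : Fin (ℓ + 1), c (k0 + k) = (τ ^ (k : ℕ)) i := by
    intro k
    induction k using Fin.induction with
    | zero => simpa using hk0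
    | succ k ih =>
      have e1 : k0 + k.succ = (k0 + k.castSucc) + 1 := by
        rw [← Fin.coeSucc_eq_succ, add_assoc]
      rw [e1, hstep, ih]
      simp [pow_succ', Equiv.Perm.mul_apply]
  have hfix : (τ ^ (ℓ + 1)) i = i := by
    have h1 := hck (Fin.last ℓ)
    have h2 := hstep (k0 + Fin.last ℓ)
    have h3 : k0 + Fin.last ℓ + 1 = k0 := by
      rw [add_assoc]
      simp
    rw [h3, hk0, h1] at h2
    rw [pow_succ', Equiv.Perm.mul_apply]
    simp only [Fin.val_last] at h2
    exact h2.symm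
  have hsum0 : ∑ k : Fin (ℓ + 1), A (c k) (c (k + 1)) = 0 := by
    have h4 : cwt A c = 0 := by rw [hc]; norm_num
    exact h4
  refine ⟨ℓ + 1, Nat.succ_pos ℓ, hfix, ?_⟩
  calc ∑ k ∈ Finset.range (ℓ + 1), A ((τ ^ k) i) ((τ ^ (k + 1)) i)
      = ∑ k : Fin (ℓ + 1), A ((τ ^ (k : ℕ)) i) ((τ ^ ((k : ℕ) + 1)) i) :=
        (Fin.sum_univ_eq_sum_range (fun k => A ((τ ^ k) i) ((τ ^ (k + 1)) i)) (ℓ + 1)).symm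
    _ = ∑ k : Fin (ℓ + 1), A (c (k0 + k)) (c (k0 + k + 1)) := by
        refine Finset.sum_congr rfl fun k _ => ?_
        rw [hstep (k0 + k), hck k, pow_succ', Equiv.Perm.mul_apply]
    _ = ∑ k : Fin (ℓ + 1), A (c k) (c (k + 1)) :=
        Equiv.sum_comp (Equiv.addLeft k0) (fun k => A (c k) (c (k + 1)))
    _ = 0 := hsum0

end StmtFourAux

/-- If `ρ(A) = 0` and the critical graph is a disjoint union of simple
circuits covering all nodes (i.e. it is the graph of a permutation), then `per(A) = 0`,
the maximizing permutation is unique, and its graph is the critical graph. -/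
theorem stmt4 {n : ℕ} (A : Fin n → Fin n → T) (h0 : RhoEq A 0)
    (τ : Equiv.Perm (Fin n)) (hτ : ∀ i j, CritArc A 0 i j ↔ j = τ i) :
    per A = (0 : T) ∧ (∃! σ : Equiv.Perm (Fin n), wt A σ = per A) ∧
    (∀ σ : Equiv.Perm (Fin n), wt A σ = per A →
      ∀ i j, CritArc A 0 i j ↔ σ i = j) := by
  have hS0 : ∀ i : Fin n,
      ∑ k ∈ Finset.range (orderOf τ), A ((τ ^ k) i) ((τ ^ (k + 1)) i) = 0 := by
    intro i
    obtain ⟨d, hd, hfix, hsum⟩ := my_critC A τ hτ i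
    set g : ℕ → T := fun k => A ((τ ^ k) i) ((τ ^ (k + 1)) i) with hg
    have hm : 0 < orderOf τ := orderOf_pos τ
    have hfm : ∀ j : Fin n, (τ ^ orderOf τ) j = j := fun j => by
      rw [pow_orderOf_eq_one]; rfl
    have hperd : ∀ k, g (k + d) = g k := by
      intro k
      simp only [hg]
      rw [show k + d + 1 = (k + 1) + d from by ring]
      rw [pow_add, pow_add, Equiv.Perm.mul_apply, Equiv.Perm.mul_apply, hfix]
    have hperm : ∀ k, g (k + orderOf τ) = g k := by
      intro k
      simp only [hg]
      rw [show k + orderOf τ + 1 = (k + 1) + orderOf τ from by ring]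
      rw [pow_add, pow_add, Equiv.Perm.mul_apply, Equiv.Perm.mul_apply, hfm]
    have e1 : ∑ k ∈ Finset.range (orderOf τ * d), g k = 0 := by
      rw [my_sum_block g d hperd (orderOf τ), hsum, smul_zero]
    have e2 : d • ∑ k ∈ Finset.range (orderOf τ), g k = 0 := by
      rw [← my_sum_block g (orderOf τ) hperm d, mul_comm d (orderOf τ)]
      exact e1
    exact my_nsmul_eq_zero hd e2
  have hwτ : wt A τ = 0 := by
    have hm : 0 < orderOf τ := orderOf_pos τ
    apply my_nsmul_eq_zero hm
    rw [← my_sum_S A τ (orderOf τ)]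
    exact Finset.sum_eq_zero fun i _ => hS0 i
  have hwle : ∀ σ : Equiv.Perm (Fin n), wt A σ ≤ 0 := by
    intro σ
    have hm : 0 < orderOf σ := orderOf_pos σ
    apply my_nsmul_nonpos hm
    rw [← my_sum_S A σ (orderOf σ)]
    exact Finset.sum_nonpos fun i _ =>
      my_S_le A h0 σ i hm (by rw [pow_orderOf_eq_one]; rfl)
  have hper : per A = 0 := by
    refine le_antisymm (Finset.sup_le fun σ _ => hwle σ) ?_
    rw [← hwτ]
    exact Finset.le_sup (Finset.mem_univ τ)
  have huniq : ∀ σ : Equiv.Perm (Fin n), wt A σ = 0 → σ = τ := by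
    intro σ hσ
    have hm : 0 < orderOf σ := orderOf_pos σ
    have hfix : ∀ j : Fin n, (σ ^ orderOf σ) j = j := fun j => by
      rw [pow_orderOf_eq_one]; rfl
    have hSle : ∀ i : Fin n,
        ∑ k ∈ Finset.range (orderOf σ), A ((σ ^ k) i) ((σ ^ (k + 1)) i) ≤ 0 :=
      fun i => my_S_le A h0 σ i hm (hfix i)
    have hsum : ∑ i : Fin n,
        ∑ k ∈ Finset.range (orderOf σ), A ((σ ^ k) i) ((σ ^ (k + 1)) i) = 0 := by
      rw [my_sum_S A σ (orderOf σ), hσ, smul_zero]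
    have hSz : ∀ i : Fin n,
        ∑ k ∈ Finset.range (orderOf σ), A ((σ ^ k) i) ((σ ^ (k + 1)) i) = 0 := by
      intro i0
      refine le_antisymm (hSle i0) ?_
      have h1 := Finset.add_sum_erase Finset.univ
        (fun i => ∑ k ∈ Finset.range (orderOf σ), A ((σ ^ k) i) ((σ ^ (k + 1)) i))
        (Finset.mem_univ i0)
      have h2 : ∑ i ∈ Finset.univ.erase i0,
          ∑ k ∈ Finset.range (orderOf σ), A ((σ ^ k) i) ((σ ^ (k + 1)) i) ≤ 0 :=
        Finset.sum_nonpos fun i _ => hSle i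
      calc (0 : T)
          = ∑ i : Fin n, ∑ k ∈ Finset.range (orderOf σ), A ((σ ^ k) i) ((σ ^ (k + 1)) i) :=
            hsum.symm
        _ = (∑ k ∈ Finset.range (orderOf σ), A ((σ ^ k) i0) ((σ ^ (k + 1)) i0)) +
            ∑ i ∈ Finset.univ.erase i0,
              ∑ k ∈ Finset.range (orderOf σ), A ((σ ^ k) i) ((σ ^ (k + 1)) i) := h1.symm
        _ ≤ (∑ k ∈ Finset.range (orderOf σ), A ((σ ^ k) i0) ((σ ^ (k + 1)) i0)) + 0 :=
            add_le_add le_rfl h2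
        _ = ∑ k ∈ Finset.range (orderOf σ), A ((σ ^ k) i0) ((σ ^ (k + 1)) i0) := add_zero _
    have harc : ∀ i, σ i = τ i := by
      intro i
      obtain ⟨ℓ, hℓ⟩ : ∃ ℓ, orderOf σ = ℓ + 1 := ⟨orderOf σ - 1, by omega⟩
      have hfixi : (σ ^ (ℓ + 1)) i = i := hℓ ▸ hfix i
      have hcrit : CritArc A 0 i (σ i) := by
        refine ⟨ℓ, fun k : Fin (ℓ + 1) => (σ ^ (k : ℕ)) i, ?_, 0, ?_, ?_⟩
        · rw [my_cwt_pow A σ i hfixi]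
          have h5 := hSz i
          rw [hℓ] at h5
          rw [h5]
          norm_num
        · simp
        · show (σ ^ (((0 : Fin (ℓ + 1)) + 1 : Fin (ℓ + 1)) : ℕ)) i = σ i
          have hv : (((0 : Fin (ℓ + 1)) + 1 : Fin (ℓ + 1)) : ℕ) = 1 % (ℓ + 1) := by
            rw [Fin.add_def]
            simp [Fin.val_one']
          rw [hv, my_pow_mod_apply σ i (ℓ + 1) hfixi, pow_one]
      exact (hτ i (σ i)).1 hcrit
    exact Equiv.ext harc
  refine ⟨hper, ⟨τ, by rw [hper]; exact hwτ,
    fun σ hσ => huniq σ (hσ.trans hper)⟩, ?_⟩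
  intro σ hσ i j
  have hστ : σ = τ := huniq σ (hσ.trans hper)
  rw [hτ i j, hστ]
  exact eq_comm
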